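/- For every positive integer n, $B_{n,\lambda}^{(s)}(x,y) = \sum_{k=1}^{n} \sum_{m=0}^{\lfloor (k-1)/2\rfloor} \binom{n}{k} B_{n-k,\lambda}(x)\,(-1)^m y^{2m+1} \lambda^{k-2m-1} S_1(k,2m+1)$, and moreover $B_{0,\lambda}^{(s)}(x,y)=0$. -/

import Mathlib

open PowerSeries Finset Complex

/-- The degenerate falling factorial `(x)_{n,λ} = x(x-λ)⋯(x-(n-1)λ)`. -/
noncomputable def dff (l x : ℂ) (n : ℕ) : ℂ := ∏ j ∈ Finset.range n, (x - j * l)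

/-- Exponential generating function of a sequence: `Σ f n * t^n / n!`. -/
noncomputable def egf (f : ℕ → ℂ) : PowerSeries ℂ := PowerSeries.mk fun n => f n / n.factorial

/-- The degenerate exponential `e_λ^x(t) = (1+λt)^{x/λ} = Σ (x)_{n,λ} t^n/n!` as a power series. -/
noncomputable def degExp (l x : ℂ) : PowerSeries ℂ := egf (dff l x)

/-- The degenerate cosine `cos_λ^{(y)}(t) = cos((y/λ) log(1+λt)) = (e_λ^{iy}(t)+e_λ^{-iy}(t))/2`. -/
noncomputable def degCos (l y : ℂ) : PowerSeries ℂ :=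
  PowerSeries.C (R := ℂ) (1/2) * (degExp l (Complex.I * y) + degExp l (-(Complex.I * y)))

/-- The degenerate sine `sin_λ^{(y)}(t) = sin((y/λ) log(1+λt)) = (e_λ^{iy}(t)-e_λ^{-iy}(t))/(2i)`. -/
noncomputable def degSin (l y : ℂ) : PowerSeries ℂ :=
  PowerSeries.C (R := ℂ) (1/(2*Complex.I)) * (degExp l (Complex.I * y) - degExp l (-(Complex.I * y)))

/-- The exponential series `e^{at} = Σ a^n t^n/n!`. -/
noncomputable def expS (a : ℂ) : PowerSeries ℂ := egf (fun n => a ^ n)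

/-- The series of `log(1+t)`. -/
noncomputable def logS : PowerSeries ℂ := PowerSeries.mk fun n => if n = 0 then 0 else (-1)^(n+1) / n

lemma coeff_egf (f : ℕ → ℂ) (n : ℕ) : coeff (R := ℂ) n (egf f) = f n / n.factorial := by
  simp [egf]

lemma constCoeff_logS : constantCoeff (R := ℂ) logS = 0 := by
  simp [logS, ← coeff_zero_eq_constantCoeff_apply]

lemma deriv_logS : (1 + X) * (d⁄dX ℂ logS) = 1 := by
  ext n
  rw [add_mul, one_mul, map_add, coeff_derivative]
  rcases n with _ | n
  · simp [logS, coeff_derivative]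
  · rw [coeff_succ_X_mul, coeff_derivative]
    simp only [logS, coeff_mk]
    rw [if_neg (by omega), if_neg (by omega)]
    have h1 : ((n:ℂ)+1) ≠ 0 := Nat.cast_add_one_ne_zero n
    have h2 : ((n:ℂ)+1+1) ≠ 0 := by
      have := Nat.cast_add_one_ne_zero (n+1) (R := ℂ); push_cast at this; exact this
    rw [PowerSeries.coeff_one, if_neg (by omega)]
    push_cast
    field_simp
    ring

lemma deriv_pow_logS (j : ℕ) :
    (1 + X) * (d⁄dX ℂ (logS ^ (j+1))) = (C (R := ℂ) ((j:ℂ)+1)) * logS ^ j := by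
  rw [Derivation.leibniz_pow]
  have : ((j+1) • logS ^ (j + 1 - 1) • d⁄dX ℂ logS : PowerSeries ℂ)
      = (C (R := ℂ) ((j:ℂ)+1)) * (logS ^ j * d⁄dX ℂ logS) := by
    have hC : (C (R := ℂ) ((j:ℂ)+1)) = ((j:ℂ⟦X⟧)+1) := by simp
    rw [nsmul_eq_mul, smul_eq_mul, hC]
    push_cast
    ring
  rw [this]
  calc (1 + X) * ((C (R := ℂ) ((j:ℂ)+1)) * (logS ^ j * d⁄dX ℂ logS))
      = (C (R := ℂ) ((j:ℂ)+1)) * logS ^ j * ((1+X) * d⁄dX ℂ logS) := by ring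
    _ = (C (R := ℂ) ((j:ℂ)+1)) * logS ^ j := by rw [deriv_logS, mul_one]

section S1sec
variable (S1 : ℕ → ℕ → ℂ) (hS1 : ∀ j, logS ^ j = PowerSeries.C (R := ℂ) (Nat.factorial j) * egf (fun k => S1 k j))

lemma factC (a : ℕ) : ((a.factorial : ℂ)) ≠ 0 := by exact_mod_cast a.factorial_ne_zero

include hS1 in
lemma S1_eq (k j : ℕ) :
    (j.factorial : ℂ) * S1 k j = (k.factorial : ℂ) * coeff (R := ℂ) k (logS ^ j) := by
  have := congrArg (coeff (R := ℂ) k) (hS1 j)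
  rw [coeff_C_mul, coeff_egf] at this
  rw [this]
  calc ((j.factorial:ℂ)) * S1 k j
      = ((j.factorial:ℂ) * S1 k j) * ((k.factorial:ℂ) * ((k.factorial:ℂ))⁻¹) := by
        rw [mul_inv_cancel₀ (factC k), mul_one]
    _ = (k.factorial:ℂ) * ((j.factorial:ℂ) * (S1 k j / (k.factorial:ℂ))) := by
        rw [div_eq_mul_inv]; ring

include hS1 in
lemma S1_vanish {k j : ℕ} (h : k < j) : S1 k j = 0 := by
  have hd : (X : ℂ⟦X⟧) ^ j ∣ logS ^ j := pow_dvd_pow_of_dvd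
    (X_dvd_iff.mpr (by simp [logS, ← coeff_zero_eq_constantCoeff_apply])) j
  have h0 : coeff (R := ℂ) k (logS ^ j) = 0 := X_pow_dvd_iff.mp hd k h
  have := S1_eq S1 hS1 k j
  rw [h0, mul_zero] at this
  exact (mul_eq_zero.mp this).resolve_left (factC j)

include hS1 in
lemma S1_rec (k j : ℕ) : S1 (k+1) (j+1) = S1 k j - (k:ℂ) * S1 k (j+1) := by
  have hd := congrArg (coeff (R := ℂ) k) (deriv_pow_logS j)
  rw [add_mul, one_mul, map_add, coeff_derivative, coeff_C_mul] at hd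
  have hX : coeff (R := ℂ) k (X * d⁄dX ℂ (logS^(j+1))) = coeff (R := ℂ) k (logS^(j+1)) * k := by
    cases k with
    | zero => simp
    | succ m => rw [coeff_succ_X_mul, coeff_derivative]; push_cast; ring
  rw [hX] at hd
  have c1 := S1_eq S1 hS1 (k+1) (j+1)
  have c2 := S1_eq S1 hS1 k (j+1)
  have c3 := S1_eq S1 hS1 k j
  have key : (((j+1).factorial : ℕ) : ℂ) * S1 (k+1) (j+1)
      = (((j+1).factorial : ℕ) : ℂ) * (S1 k j - (k:ℂ) * S1 k (j+1)) := by
    rw [c1]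
    push_cast [Nat.factorial_succ] at hd c2 c3 ⊢
    linear_combination (k.factorial:ℂ) * hd - ((j:ℂ)+1) * c3 + (k:ℂ) * c2
  exact mul_left_cancel₀ (factC (j+1)) key


include hS1 in
lemma S1_zero_right (k : ℕ) : S1 k 0 = if k = 0 then 1 else 0 := by
  have := S1_eq S1 hS1 k 0
  rw [pow_zero] at this
  simp only [Nat.factorial_zero, Nat.cast_one, one_mul, PowerSeries.coeff_one] at this
  rcases eq_or_ne k 0 with h | h
  · simp [h] at this ⊢; simp [this]
  · simp [h] at this ⊢; exact this

include hS1 in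
lemma dff_expand (l z : ℂ) : ∀ k, dff l z k = ∑ j ∈ range (k+1), S1 k j * z^j * l^(k-j) := by
  intro k
  induction k with
  | zero =>
    have h00 : S1 0 0 = 1 := by simpa using S1_zero_right S1 hS1 0
    simp [dff, h00]
  | succ k ih =>
    have hstep : dff l z (k+1) = dff l z k * (z - (k:ℕ) * l) := by
      rw [dff, Finset.prod_range_succ, ← dff]
    set A := ∑ j ∈ range (k+1), S1 k j * z^(j+1) * l^(k-j) with hA
    set Bm := ∑ j ∈ range (k+1), S1 k j * z^j * l^(k+1-j) with hBm
    have hk0 : (k:ℂ) * S1 k 0 = 0 := by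
      rcases eq_or_ne k 0 with h | h
      · simp [h]
      · rw [S1_zero_right S1 hS1, if_neg h, mul_zero]
    have hLHS : dff l z (k+1) = A - (k:ℂ) * Bm := by
      rw [hstep, ih, hA, hBm, Finset.mul_sum, Finset.sum_mul, ← Finset.sum_sub_distrib]
      apply Finset.sum_congr rfl
      intro j hj
      have hjk : j ≤ k := Nat.lt_succ_iff.mp (Finset.mem_range.mp hj)
      have hl : l^(k+1-j) = l^(k-j) * l := by
        rw [← pow_succ]
        congr 1
        omega
      rw [hl]
      ring
    have hshift : ∑ j ∈ range (k+1), S1 k (j+1) * z^(j+1) * l^(k-j)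
        = Bm - S1 k 0 * l^(k+1) := by
      have h1 := Finset.sum_range_succ' (fun j => S1 k j * z^j * l^(k+1-j)) (k+1)
      have h2 := Finset.sum_range_succ (fun j => S1 k j * z^j * l^(k+1-j)) (k+1)
      have hv : S1 k (k+1) = 0 := S1_vanish S1 hS1 (Nat.lt_succ_self k)
      simp only [hv, zero_mul, add_zero, pow_zero, mul_one] at h2
      rw [h2] at h1
      have h3 : ∀ j ∈ range (k+1),
          (fun j => S1 k j * z^j * l^(k+1-j)) (j+1) = S1 k (j+1) * z^(j+1) * l^(k-j) := by
        intro j hj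
        simp only [Nat.succ_sub_succ]
      rw [Finset.sum_congr rfl h3] at h1
      rw [← hBm] at h1
      rw [h1]
      simp
    have hRHS : ∑ j ∈ range (k+2), S1 (k+1) j * z^j * l^(k+1-j)
        = A - (k:ℂ) * (Bm - S1 k 0 * l^(k+1)) := by
      rw [Finset.sum_range_succ']
      have h0 : S1 (k+1) 0 = 0 := by
        rw [S1_zero_right S1 hS1]; simp
      simp only [h0, zero_mul, add_zero, pow_zero, mul_one, Nat.succ_sub_succ]
      rw [← hshift, hA, Finset.mul_sum, ← Finset.sum_sub_distrib]
      apply Finset.sum_congr rfl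
      intro j hj
      rw [S1_rec S1 hS1]
      ring
    rw [hLHS, hRHS]
    linear_combination (-(l:ℂ)^(k+1)) * hk0



lemma coeff_degSin (l w : ℂ) (k : ℕ) :
    coeff (R := ℂ) k (degSin l w) = (dff l (I*w) k - dff l (-(I*w)) k) / (2*I) / k.factorial := by
  rw [degSin, coeff_C_mul, map_sub]
  simp only [degExp, coeff_egf]
  have h2I : (2*I:ℂ) ≠ 0 := by simp [I_ne_zero]
  have hk : ((k.factorial:ℂ)) ≠ 0 := factC k
  rw [div_div, eq_div_iff (mul_ne_zero h2I hk)]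
  field_simp

lemma sum_odd_only (f : ℕ → ℂ) (hf : ∀ m, f (2*m) = 0) (N : ℕ) :
    ∑ j ∈ range N, f j = ∑ m ∈ range (N/2), f (2*m+1) := by
  induction N with
  | zero => simp
  | succ N ih =>
    rw [Finset.sum_range_succ, ih]
    rcases Nat.even_or_odd N with ⟨m, hm⟩ | ⟨m, hm⟩
    · have hz : f N = 0 := by
        have : N = 2*m := by omega
        rw [this]; exact hf m
      rw [hz, add_zero]
      have he : (N+1)/2 = N/2 := by omega
      rw [he]
    · have h1 : (N+1)/2 = N/2 + 1 := by omega
      rw [h1, Finset.sum_range_succ]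
      have he : 2*(N/2)+1 = N := by omega
      rw [he]

include hS1 in
lemma sk_eval (l : ℂ) (w : ℂ) (k : ℕ) (hk : 1 ≤ k) :
    (k.factorial : ℂ) * coeff (R := ℂ) k (degSin l w)
    = ∑ m ∈ range ((k-1)/2+1), (-1)^m * w^(2*m+1) * l^(k-(2*m+1)) * S1 k (2*m+1) := by
  rw [coeff_degSin, mul_comm, div_mul_cancel₀ _ (factC k)]
  rw [dff_expand S1 hS1, dff_expand S1 hS1, ← Finset.sum_sub_distrib, Finset.sum_div]
  have key : ∑ j ∈ range (k+1),
      (S1 k j * (I*w)^j * l^(k-j) - S1 k j * (-(I*w))^j * l^(k-j)) / (2*I)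
      = ∑ m ∈ range ((k+1)/2),
      (S1 k (2*m+1) * (I*w)^(2*m+1) * l^(k-(2*m+1))
        - S1 k (2*m+1) * (-(I*w))^(2*m+1) * l^(k-(2*m+1))) / (2*I) := by
    apply sum_odd_only
    intro m
    rw [Even.neg_pow ⟨m, by ring⟩]
    simp
  rw [key]
  have h2 : (k+1)/2 = (k-1)/2 + 1 := by omega
  rw [h2]
  apply Finset.sum_congr rfl
  intro m _
  rw [Odd.neg_pow ⟨m, by ring⟩]
  have hIpow : (I*w)^(2*m+1) = I * (-1)^m * w^(2*m+1) := by
    rw [mul_pow, pow_succ, pow_mul, I_sq]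
    ring
  rw [hIpow]
  have hI : (2*I : ℂ) ≠ 0 := by
    simp [I_ne_zero]
  field_simp
  ring

lemma coeff_zero_degSin (l w : ℂ) : coeff (R := ℂ) 0 (degSin l w) = 0 := by
  rw [coeff_degSin]
  simp [dff]

end S1sec


theorem stmt4 (lam x y : ℝ) (B Bs : ℕ → ℂ) (S1 : ℕ → ℕ → ℂ)
    (hB : egf B * (degExp lam (1/2) - degExp lam (-(1/2))) = PowerSeries.X * degExp lam x)
    (hBs : egf Bs * (degExp lam (1/2) - degExp lam (-(1/2))) =
      PowerSeries.X * degExp lam x * degSin lam y)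
    (hS1 : ∀ j, logS ^ j = PowerSeries.C (R := ℂ) (Nat.factorial j) * egf (fun k => S1 k j)) :
    Bs 0 = 0 ∧ ∀ n : ℕ, 0 < n →
      Bs n = ∑ k ∈ Finset.Icc 1 n, ∑ m ∈ Finset.range ((k-1)/2+1),
        (n.choose k : ℂ) * B (n-k) * (-1)^m * (y:ℂ)^(2*m+1) * (lam:ℂ)^(k-2*m-1) *
          S1 k (2*m+1) := by
  set D := degExp (lam:ℂ) (1/2) - degExp (lam:ℂ) (-(1/2)) with hDdef
  have hD : D ≠ 0 := by
    intro h
    have h1 := congrArg (coeff (R := ℂ) 1) h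
    simp only [hDdef, map_sub, degExp, coeff_egf, map_zero] at h1
    simp [dff] at h1
  have heq : egf Bs = egf B * degSin (lam:ℂ) (y:ℂ) := by
    have hBD : egf B * degSin (lam:ℂ) (y:ℂ) * D
        = PowerSeries.X * degExp (lam:ℂ) (x:ℂ) * degSin (lam:ℂ) (y:ℂ) := by
      rw [← hB]; ring
    have h0 : (egf Bs - egf B * degSin (lam:ℂ) (y:ℂ)) * D = 0 := by
      rw [sub_mul, hBD, hBs, sub_self]
    rcases mul_eq_zero.mp h0 with h | h
    · exact sub_eq_zero.mp h
    · exact absurd h hD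
  have hcoeff : ∀ n : ℕ, Bs n = (n.factorial : ℂ) * coeff (R := ℂ) n (egf Bs) := by
    intro n
    rw [coeff_egf, mul_comm, div_mul_cancel₀ _ (factC n)]
  have main : ∀ n : ℕ, Bs n = ∑ k ∈ range (n+1),
      (n.choose k : ℂ) * B (n-k) * ((k.factorial : ℂ) * coeff (R := ℂ) k (degSin (lam:ℂ) (y:ℂ))) := by
    intro n
    rw [hcoeff n, heq, PowerSeries.coeff_mul,
      Finset.Nat.sum_antidiagonal_eq_sum_range_succ_mk, ← Finset.sum_range_reflect,
      Finset.mul_sum]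
    apply Finset.sum_congr rfl
    intro k hk
    have hkn : k ≤ n := by have := Finset.mem_range.mp hk; omega
    have hrev : n - (n - k) = k := by omega
    simp only [Nat.succ_sub_one]
    rw [hrev, coeff_egf]
    have hfact : ((n.factorial : ℕ) : ℂ)
        = (n.choose k : ℂ) * ((k.factorial : ℕ) : ℂ) * (((n-k).factorial : ℕ) : ℂ) := by
      rw [← Nat.cast_mul, ← Nat.cast_mul]
      exact_mod_cast (Nat.choose_mul_factorial_mul_factorial hkn).symm
    rw [hfact]
    have hnk : (((n-k).factorial : ℕ) : ℂ) ≠ 0 := factC _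
    field_simp
  constructor
  · rw [main 0]
    simp [coeff_zero_degSin]
  · intro n hn
    rw [main n]
    have hsplit : range (n+1) = insert 0 (Finset.Icc 1 n) := by
      ext a; simp [Finset.mem_Icc]; omega
    rw [hsplit, Finset.sum_insert (by simp)]
    rw [coeff_zero_degSin]
    simp only [mul_zero, zero_add]
    apply Finset.sum_congr rfl
    intro k hk
    have hk1 : 1 ≤ k := (Finset.mem_Icc.mp hk).1
    rw [sk_eval S1 hS1 (lam:ℂ) (y:ℂ) k hk1, Finset.mul_sum]
    apply Finset.sum_congr rfl
    intro m _
    have hexp : k - 2*m - 1 = k - (2*m+1) := by omega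
    rw [hexp]
    ring
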